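/- For real random variables X and Y with finite means, if F ≤_disp G then F ≤_dil G, where F and G are the distributions of X and Y. -/

import Mathlib

open MeasureTheory ProbabilityTheory Set Filter Topology

/-- Left-continuous quantile function of a cdf. -/
noncomputable def quantile (F : ℝ → ℝ) (p : ℝ) : ℝ := sInf {t : ℝ | p ≤ F t}

namespace DispDil


/-! ### Subgradient of a convex function -/

noncomputable def sg (φ : ℝ → ℝ) (x : ℝ) : ℝ :=
  sSup ((fun z => (φ x - φ z) / (x - z)) '' Set.Iio x)

variable {φ : ℝ → ℝ}

lemma sg_set_ne (x : ℝ) : ((fun z => (φ x - φ z) / (x - z)) '' Set.Iio x).Nonempty :=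
  ⟨_, ⟨x - 1, by simp, rfl⟩⟩

lemma slope3 (hφ : ConvexOn ℝ Set.univ φ) {x y z : ℝ} (h1 : x < y) (h2 : y < z) :
    (φ y - φ x) / (y - x) ≤ (φ z - φ y) / (z - y) :=
  hφ.slope_mono_adjacent trivial trivial h1 h2

lemma sg_bdd (hφ : ConvexOn ℝ Set.univ φ) (x : ℝ) :
    BddAbove ((fun z => (φ x - φ z) / (x - z)) '' Set.Iio x) := by
  refine ⟨(φ (x + 1) - φ x) / (x + 1 - x), ?_⟩
  rintro y ⟨z, hz, rfl⟩
  exact slope3 hφ hz (by linarith)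

lemma sg_le (hφ : ConvexOn ℝ Set.univ φ) {x y : ℝ} (h : x < y) :
    sg φ x ≤ (φ y - φ x) / (y - x) := by
  refine csSup_le (sg_set_ne x) ?_
  rintro w ⟨z, hz, rfl⟩
  exact slope3 hφ hz h

lemma le_sg (hφ : ConvexOn ℝ Set.univ φ) {x z : ℝ} (h : z < x) :
    (φ x - φ z) / (x - z) ≤ sg φ x :=
  le_csSup (sg_bdd hφ x) ⟨z, h, rfl⟩

lemma sg_mono (hφ : ConvexOn ℝ Set.univ φ) : Monotone (sg φ) := by
  intro x y hxy
  rcases eq_or_lt_of_le hxy with rfl | h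
  · exact le_rfl
  · refine csSup_le (sg_set_ne x) ?_
    rintro w ⟨z, hz, rfl⟩
    exact (slope3 hφ hz h).trans (le_sg hφ h)

lemma sg_sub (hφ : ConvexOn ℝ Set.univ φ) (x y : ℝ) :
    φ x + sg φ x * (y - x) ≤ φ y := by
  rcases lt_trichotomy x y with h | rfl | h
  · have h1 : sg φ x * (y - x) ≤ φ y - φ x :=
      (le_div_iff₀ (by linarith)).mp (sg_le hφ h)
    linarith
  · simp
  · have h1 : φ x - φ y ≤ sg φ x * (x - y) :=
      (div_le_iff₀ (by linarith)).mp (le_sg hφ h)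
    have h2 : sg φ x * (y - x) = -(sg φ x * (x - y)) := by ring
    linarith



section Quant

variable (ν : Measure ℝ) [IsProbabilityMeasure ν]

lemma quantile_cdf_le_iff {p : ℝ} (hp : p ∈ Set.Ioo (0:ℝ) 1) (t : ℝ) :
    quantile (cdf ν) p ≤ t ↔ p ≤ cdf ν t := by
  obtain ⟨hp0, hp1⟩ := hp
  have hne : {s : ℝ | p ≤ cdf ν s}.Nonempty := by
    obtain ⟨s, hs⟩ := ((tendsto_cdf_atTop ν).eventually (eventually_gt_nhds hp1)).exists
    exact ⟨s, hs.le⟩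
  obtain ⟨t₀, ht₀⟩ := ((tendsto_cdf_atBot ν).eventually (eventually_lt_nhds hp0)).exists
  have hbdd : BddBelow {s : ℝ | p ≤ cdf ν s} := by
    refine ⟨t₀, fun s hs => ?_⟩
    by_contra hc
    push_neg at hc
    exact absurd (hs.trans ((cdf ν).mono hc.le)) (not_le.mpr ht₀)
  have key : p ≤ cdf ν (sInf {s : ℝ | p ≤ cdf ν s}) := by
    have h1 : ∀ᶠ s in 𝓝[>] (sInf {s : ℝ | p ≤ cdf ν s}), p ≤ cdf ν s := by
      filter_upwards [self_mem_nhdsWithin] with s hs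
      obtain ⟨u, huS, hu⟩ := (csInf_lt_iff hbdd hne).mp hs
      exact le_trans huS ((cdf ν).mono hu.le)
    have h2 : Tendsto (cdf ν) (𝓝[>] (sInf {s : ℝ | p ≤ cdf ν s}))
        (𝓝 (cdf ν (sInf {s : ℝ | p ≤ cdf ν s}))) :=
      ((cdf ν).right_continuous _).mono_left (nhdsWithin_mono _ Ioi_subset_Ici_self)
    exact ge_of_tendsto h2 h1
  constructor
  · intro h
    exact key.trans ((cdf ν).mono h)
  · intro h
    exact csInf_le hbdd h

lemma quantile_cdf_monoOn : MonotoneOn (quantile (cdf ν)) (Set.Ioo 0 1) := by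
  intro p hp q hq hpq
  rw [quantile_cdf_le_iff ν hp]
  exact hpq.trans ((quantile_cdf_le_iff ν hq _).mp le_rfl)

noncomputable def qf : ℝ → ℝ :=
  fun p => if p ∈ Set.Ioo (0:ℝ) 1 then quantile (cdf ν) p else 0

lemma monoOn_qf : MonotoneOn (qf ν) (Set.Ioo 0 1) := by
  intro p hp q hq h
  simp only [qf, if_pos hp, if_pos hq]
  exact quantile_cdf_monoOn ν hp hq h

lemma qf_eq {p : ℝ} (hp : p ∈ Set.Ioo (0:ℝ) 1) : qf ν p = quantile (cdf ν) p := if_pos hp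

lemma measurable_qf : Measurable (qf ν) := by
  apply measurable_of_Iic
  intro t
  have hset : qf ν ⁻¹' Set.Iic t =
      (Set.Ioo 0 1 ∩ Set.Iic (cdf ν t)) ∪ ((Set.Ioo (0:ℝ) 1)ᶜ ∩ {p : ℝ | (0:ℝ) ≤ t}) := by
    ext p
    by_cases hp : p ∈ Set.Ioo (0:ℝ) 1
    · simp only [Set.mem_preimage, Set.mem_Iic, qf_eq ν hp, Set.mem_union, Set.mem_inter_iff,
        Set.mem_compl_iff, Set.mem_setOf_eq, hp, not_true, false_and, or_false, true_and]
      exact quantile_cdf_le_iff ν hp t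
    · simp only [Set.mem_preimage, Set.mem_Iic, qf, hp, if_false, Set.mem_union,
        Set.mem_inter_iff, false_and, false_or, Set.mem_compl_iff, not_false_iff, true_and,
        Set.mem_setOf_eq, if_neg]
  rw [hset]
  have h2 : MeasurableSet {p : ℝ | (0:ℝ) ≤ t} := by
    by_cases h0 : (0:ℝ) ≤ t
    · simp [h0]
    · simp [h0]
  exact ((measurableSet_Ioo.inter measurableSet_Iic).union
    (measurableSet_Ioo.compl.inter h2))

instance : IsProbabilityMeasure (volume.restrict (Set.Ioo (0:ℝ) 1)) :=
  ⟨by simp [Real.volume_Ioo]⟩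

lemma map_qf : Measure.map (qf ν) (volume.restrict (Set.Ioo 0 1)) = ν := by
  haveI := Measure.isProbabilityMeasure_map (μ := volume.restrict (Set.Ioo (0:ℝ) 1))
    (measurable_qf ν).aemeasurable
  refine Measure.ext_of_Iic _ _ fun t => ?_
  rw [Measure.map_apply (measurable_qf ν) measurableSet_Iic,
    Measure.restrict_apply ((measurable_qf ν) measurableSet_Iic), ← ofReal_cdf ν t]
  have hset : qf ν ⁻¹' Set.Iic t ∩ Set.Ioo 0 1 = Set.Ioo (0:ℝ) 1 ∩ Set.Iic (cdf ν t) := by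
    ext p
    constructor
    · rintro ⟨hpt, hp⟩
      refine ⟨hp, ?_⟩
      rw [Set.mem_preimage, Set.mem_Iic, qf_eq ν hp, quantile_cdf_le_iff ν hp] at hpt
      exact hpt
    · rintro ⟨hp, hpt⟩
      refine ⟨?_, hp⟩
      rw [Set.mem_preimage, Set.mem_Iic, qf_eq ν hp, quantile_cdf_le_iff ν hp]
      exact hpt
  rw [hset]
  have h0 : 0 ≤ cdf ν t := cdf_nonneg ν t
  have h1 : cdf ν t ≤ 1 := cdf_le_one ν t
  rcases eq_or_lt_of_le h1 with heq | hlt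
  · have : Set.Ioo (0:ℝ) 1 ∩ Set.Iic (cdf ν t) = Set.Ioo (0:ℝ) 1 :=
      Set.inter_eq_left.mpr (fun p hp => by rw [Set.mem_Iic, heq]; exact hp.2.le)
    rw [this, Real.volume_Ioo, heq]
    norm_num
  · have : Set.Ioo (0:ℝ) 1 ∩ Set.Iic (cdf ν t) = Set.Ioc 0 (cdf ν t) := by
      ext p
      simp only [Set.mem_inter_iff, Set.mem_Ioo, Set.mem_Iic, Set.mem_Ioc]
      exact ⟨fun ⟨⟨a, _⟩, c⟩ => ⟨a, c⟩, fun ⟨a, c⟩ => ⟨⟨a, lt_of_le_of_lt c hlt⟩, c⟩⟩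
    rw [this, Real.volume_Ioc]
    simp

lemma integral_qf {g : ℝ → ℝ} (hg : AEStronglyMeasurable g ν) :
    ∫ x, g x ∂ν = ∫ p in Set.Ioo (0:ℝ) 1, g (qf ν p) := by
  conv_lhs => rw [← map_qf ν]
  rw [integral_map (measurable_qf ν).aemeasurable (by rwa [map_qf])]

lemma integrable_qf {g : ℝ → ℝ} (hg : AEStronglyMeasurable g ν) :
    Integrable (fun p => g (qf ν p)) (volume.restrict (Set.Ioo 0 1)) ↔ Integrable g ν := by
  have h := integrable_map_measure (f := qf ν) (μ := volume.restrict (Set.Ioo (0:ℝ) 1))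
    (by rwa [map_qf]) (measurable_qf ν).aemeasurable
  rw [map_qf] at h
  exact h.symm

end Quant

lemma core {a b φ : ℝ → ℝ} (hφ : ConvexOn ℝ Set.univ φ)
    (ha : MonotoneOn a (Set.Ioo 0 1))
    (hc : MonotoneOn (fun p => b p - a p) (Set.Ioo 0 1))
    (hci : Integrable (fun p => b p - a p) (volume.restrict (Set.Ioo 0 1)))
    (hzero : ∫ p in Set.Ioo (0:ℝ) 1, (b p - a p) = 0)
    (hfa : Integrable (fun p => φ (a p)) (volume.restrict (Set.Ioo 0 1)))
    (hfb : Integrable (fun p => φ (b p)) (volume.restrict (Set.Ioo 0 1))) :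
    ∫ p in Set.Ioo (0:ℝ) 1, φ (a p) ≤ ∫ p in Set.Ioo (0:ℝ) 1, φ (b p) := by
  set m := volume.restrict (Set.Ioo (0:ℝ) 1) with hm
  set c := fun p => b p - a p with hcdef
  obtain ⟨K, hK⟩ : ∃ K : ℝ, ∀ᵐ p ∂m, φ (a p) + K * c p ≤ φ (b p) := by
    by_cases hex : (∃ p ∈ Set.Ioo (0:ℝ) 1, 0 < c p) ∧ (∃ p ∈ Set.Ioo (0:ℝ) 1, c p ≤ 0)
    · obtain ⟨⟨p₁, hp₁, hcp₁⟩, ⟨p₀, hp₀, hcp₀⟩⟩ := hex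
      have hord : ∀ p ∈ Set.Ioo (0:ℝ) 1, ∀ q ∈ Set.Ioo (0:ℝ) 1, c p ≤ 0 → 0 < c q → p ≤ q := by
        intro p hp q hq hcp hcq
        by_contra h
        push_neg at h
        exact absurd (lt_of_lt_of_le hcq (hc hq hp h.le)) (not_lt.mpr hcp)
      set S := (fun p => sg φ (a p)) '' {p ∈ Set.Ioo (0:ℝ) 1 | 0 < c p} with hS
      have hSne : S.Nonempty := ⟨_, ⟨p₁, ⟨hp₁, hcp₁⟩, rfl⟩⟩
      have hSbdd : BddBelow S := by
        refine ⟨sg φ (a p₀), ?_⟩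
        rintro y ⟨q, ⟨hq, hcq⟩, rfl⟩
        exact sg_mono hφ (ha hp₀ hq (hord _ hp₀ _ hq hcp₀ hcq))
      refine ⟨sInf S, ?_⟩
      rw [hm, ae_restrict_iff' measurableSet_Ioo]
      refine ae_of_all _ fun p hp => ?_
      have hsub : φ (a p) + sg φ (a p) * c p ≤ φ (b p) := by
        have := sg_sub hφ (a p) (b p)
        simpa [hcdef] using this
      rcases lt_trichotomy (c p) 0 with hcp | hcp | hcp
      · have hle : sg φ (a p) ≤ sInf S := by
          refine le_csInf hSne ?_
          rintro y ⟨q, ⟨hq, hcq⟩, rfl⟩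
          exact sg_mono hφ (ha hp hq (hord _ hp _ hq hcp.le hcq))
        nlinarith
      · have : b p = a p := by
          have : b p - a p = 0 := hcp
          linarith
        simp [hcp, this]
      · have hle : sInf S ≤ sg φ (a p) := csInf_le hSbdd ⟨p, ⟨hp, hcp⟩, rfl⟩
        nlinarith
    · -- constant sign: c = 0 a.e.
      have hae : ∀ᵐ p ∂m, c p = 0 := by
        rcases not_and_or.mp hex with h | h
        · push_neg at h
          have hn : 0 ≤ᵐ[m] fun p => -(c p) :=
            (ae_restrict_iff' measurableSet_Ioo).mpr
              (ae_of_all _ fun p hp => neg_nonneg.mpr (h p hp))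
          have h0 : ∫ p, -(c p) ∂m = 0 := by
            rw [integral_neg, hzero, neg_zero]
          have := (integral_eq_zero_iff_of_nonneg_ae hn hci.neg).mp h0
          filter_upwards [this] with p hp
          simpa using congrArg Neg.neg hp
        · push_neg at h
          have hn : 0 ≤ᵐ[m] c :=
            (ae_restrict_iff' measurableSet_Ioo).mpr
              (ae_of_all _ fun p hp => (h p hp).le)
          have := (integral_eq_zero_iff_of_nonneg_ae hn hci).mp hzero
          filter_upwards [this] with p hp
          exact hp
      refine ⟨0, ?_⟩
      filter_upwards [hae] with p hp
      have hba : b p = a p := by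
        have : b p - a p = 0 := hp
        linarith
      simp [hba, hp]
  calc ∫ p in Set.Ioo (0:ℝ) 1, φ (a p)
      = ∫ p in Set.Ioo (0:ℝ) 1, (φ (a p) + K * c p) := by
        rw [integral_add hfa (hci.const_mul K), integral_const_mul, hzero, mul_zero, add_zero]
    _ ≤ ∫ p in Set.Ioo (0:ℝ) 1, φ (b p) :=
        integral_mono_ae (hfa.add (hci.const_mul K)) hfb hK


end DispDil

open DispDil in
/-- For integrable random variables, the dispersive order implies the
dilation order. -/
theorem stmt_4 {Ω : Type*} [MeasurableSpace Ω] (μ : Measure Ω)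
    [IsProbabilityMeasure μ] (X Y : Ω → ℝ)
    (hX : Integrable X μ) (hY : Integrable Y μ)
    (hdisp : ∀ p q : ℝ, 0 < p → p ≤ q → q < 1 →
      quantile (fun t => (μ {ω | X ω ≤ t}).toReal) q -
        quantile (fun t => (μ {ω | X ω ≤ t}).toReal) p ≤
      quantile (fun t => (μ {ω | Y ω ≤ t}).toReal) q -
        quantile (fun t => (μ {ω | Y ω ≤ t}).toReal) p) :
    ∀ φ : ℝ → ℝ, ConvexOn ℝ Set.univ φ →
      Integrable (fun ω => φ (X ω - ∫ ω', X ω' ∂μ)) μ →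
      Integrable (fun ω => φ (Y ω - ∫ ω', Y ω' ∂μ)) μ →
      ∫ ω, φ (X ω - ∫ ω', X ω' ∂μ) ∂μ ≤ ∫ ω, φ (Y ω - ∫ ω', Y ω' ∂μ) ∂μ := by
  intro φ hφ hIX hIY
  have hXm : AEMeasurable X μ := hX.aemeasurable
  have hYm : AEMeasurable Y μ := hY.aemeasurable
  set mX := ∫ ω', X ω' ∂μ with hmX
  set mY := ∫ ω', Y ω' ∂μ with hmY
  set νX := μ.map X with hνX
  set νY := μ.map Y with hνY
  haveI : IsProbabilityMeasure νX := Measure.isProbabilityMeasure_map hXm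
  haveI : IsProbabilityMeasure νY := Measure.isProbabilityMeasure_map hYm
  -- identify the cdfs
  have hFX : (fun t => (μ {ω | X ω ≤ t}).toReal) = ⇑(cdf νX) := by
    funext t
    rw [cdf_eq_real, Measure.real, hνX, Measure.map_apply_of_aemeasurable hXm measurableSet_Iic]
    rfl
  have hFY : (fun t => (μ {ω | Y ω ≤ t}).toReal) = ⇑(cdf νY) := by
    funext t
    rw [cdf_eq_real, Measure.real, hνY, Measure.map_apply_of_aemeasurable hYm measurableSet_Iic]
    rfl
  rw [hFX, hFY] at hdisp
  -- continuity of φ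
  have hφc : Continuous φ := continuousOn_univ.mp (hφ.continuousOn isOpen_univ)
  have hgX : AEStronglyMeasurable (fun x => φ (x - mX)) νX :=
    (hφc.comp (continuous_id.sub continuous_const)).aestronglyMeasurable
  have hgY : AEStronglyMeasurable (fun x => φ (x - mY)) νY :=
    (hφc.comp (continuous_id.sub continuous_const)).aestronglyMeasurable
  have hid : AEStronglyMeasurable (fun x : ℝ => x) νX := aestronglyMeasurable_id
  have hidY : AEStronglyMeasurable (fun x : ℝ => x) νY := aestronglyMeasurable_id
  -- transfer: means
  have hmeanX : mX = ∫ p in Set.Ioo (0:ℝ) 1, qf νX p := by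
    rw [hmX, ← integral_map hXm hid, ← hνX, integral_qf νX hid]
  have hmeanY : mY = ∫ p in Set.Ioo (0:ℝ) 1, qf νY p := by
    rw [hmY, ← integral_map hYm hidY, ← hνY, integral_qf νY hidY]
  -- integrability of qf
  have hIqX : Integrable (fun p => qf νX p) (volume.restrict (Set.Ioo 0 1)) :=
    (integrable_qf νX hid).mpr ((integrable_map_measure hid hXm).mpr hX)
  have hIqY : Integrable (fun p => qf νY p) (volume.restrict (Set.Ioo 0 1)) :=
    (integrable_qf νY hidY).mpr ((integrable_map_measure hidY hYm).mpr hY)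
  -- transfer of the φ integrals
  have hEX : ∫ ω, φ (X ω - mX) ∂μ = ∫ p in Set.Ioo (0:ℝ) 1, φ (qf νX p - mX) := by
    rw [← integral_map hXm hgX, ← hνX, integral_qf νX hgX]
  have hEY : ∫ ω, φ (Y ω - mY) ∂μ = ∫ p in Set.Ioo (0:ℝ) 1, φ (qf νY p - mY) := by
    rw [← integral_map hYm hgY, ← hνY, integral_qf νY hgY]
  have hIA : Integrable (fun p => φ (qf νX p - mX)) (volume.restrict (Set.Ioo 0 1)) :=
    (integrable_qf νX hgX).mpr ((integrable_map_measure hgX hXm).mpr hIX)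
  have hIB : Integrable (fun p => φ (qf νY p - mY)) (volume.restrict (Set.Ioo 0 1)) :=
    (integrable_qf νY hgY).mpr ((integrable_map_measure hgY hYm).mpr hIY)
  rw [hEX, hEY]
  have ha' : Integrable (fun p => qf νX p - mX) (volume.restrict (Set.Ioo 0 1)) := by
    exact hIqX.sub (integrable_const mX)
  have hb' : Integrable (fun p => qf νY p - mY) (volume.restrict (Set.Ioo 0 1)) := by
    exact hIqY.sub (integrable_const mY)
  have ha : MonotoneOn (fun p => qf νX p - mX) (Set.Ioo 0 1) := fun p hp q hq h =>
    sub_le_sub_right (monoOn_qf νX hp hq h) mX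
  have hcmono : MonotoneOn (fun p => (qf νY p - mY) - (qf νX p - mX)) (Set.Ioo 0 1) := by
    intro p hp q hq h
    have := hdisp p q hp.1 h hq.2
    rw [← qf_eq νX hp, ← qf_eq νX hq, ← qf_eq νY hp, ← qf_eq νY hq] at this
    simp only
    linarith
  have hci : Integrable (fun p => (qf νY p - mY) - (qf νX p - mX))
      (volume.restrict (Set.Ioo 0 1)) := by
    exact hb'.sub ha'
  have hzero : ∫ p in Set.Ioo (0:ℝ) 1, ((qf νY p - mY) - (qf νX p - mX)) = 0 := by
    rw [integral_sub hb' ha', integral_sub hIqY (integrable_const mY),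
      integral_sub hIqX (integrable_const mX), integral_const]
    simp [measure_univ, ← hmeanX, ← hmeanY]
  exact core hφ ha hcmono hci hzero hIA hIB
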